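/- For a finite maximum-entropy MDP with a continuously differentiable parametrized policy, the per-start-state objective J(θ|s₀) = Σ_a π_θ(a|s₀) Q^{π_θ}(s₀,a) + H^{π_θ}(s₀) is differentiable in θ with dJ(θ|s₀)/dθ = Σ_a π_θ(a|s₀) · dQ^{π_θ}(s₀,a)/dθ + 𝒢_θ(s₀), where 𝒢_θ(s) = Σ_a (dπ_θ(a|s)/dθ) Q^{π_θ}(s,a) + dH^{π_θ}(s)/dθ. -/

import Mathlib

/-- For a finite maximum-entropy MDP with a continuously differentiable parametrized policy,
the per-start-state objective `J(θ|s₀) = Σ_a π_θ(a|s₀) Q^{π_θ}(s₀,a) + H^{π_θ}(s₀)` is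
differentiable in `θ` with
`dJ(θ|s₀)/dθ = Σ_a π_θ(a|s₀) · dQ^{π_θ}(s₀,a)/dθ + 𝒢_θ(s₀)`, where
`𝒢_θ(s) = Σ_a (dπ_θ(a|s)/dθ) Q^{π_θ}(s,a) + dH^{π_θ}(s)/dθ`. -/
theorem per_start_state_objective_deriv
    {S A : Type*} [Fintype S] [Fintype A] [DecidableEq S]
    (p : S → A → S → ℝ) (hp_nonneg : ∀ s a s', 0 ≤ p s a s')
    (hp_sum : ∀ s a, ∑ s', p s a s' = 1)
    (r : S → A → ℝ)
    (γ : ℝ) (hγ0 : 0 ≤ γ) (hγ1 : γ < 1)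
    (π : ℝ → S → A → ℝ)
    (hπ_smooth : ∀ s a, ContDiff ℝ 1 (fun θ => π θ s a))
    (hπ_pos : ∀ θ s a, 0 < π θ s a)
    (hπ_sum : ∀ θ s, ∑ a, π θ s a = 1)
    (pk : ℝ → ℕ → S → S → ℝ)
    (hpk0 : ∀ θ s s', pk θ 0 s s' = if s' = s then 1 else 0)
    (hpkS : ∀ θ k s s',
      pk θ (k + 1) s s' = ∑ a, π θ s a * ∑ s'', p s a s'' * pk θ k s'' s')
    (H : ℝ → S → ℝ) (hH : ∀ θ s, H θ s = -∑ a, π θ s a * Real.log (π θ s a))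
    (Q : ℝ → S → A → ℝ)
    (hQ : ∀ θ s a, Q θ s a = r s a +
      ∑' k : ℕ, γ ^ (k + 1) *
        ∑ s', (∑ s₁, p s a s₁ * pk θ k s₁ s') * ((∑ a', π θ s' a' * r s' a') + H θ s')) :
    ∀ (θ₀ : ℝ) (s₀ : S),
      HasDerivAt
        (fun θ => (∑ a, π θ s₀ a * Q θ s₀ a) + H θ s₀)
        ((∑ a, π θ₀ s₀ a * deriv (fun θ => Q θ s₀ a) θ₀) +
          ((∑ a, deriv (fun θ => π θ s₀ a) θ₀ * Q θ₀ s₀ a) +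
            deriv (fun θ => H θ s₀) θ₀))
        θ₀ := by
  intro θ₀ s₀
  -- basic differentiability facts
  have hπ_diff : ∀ s a, Differentiable ℝ (fun θ => π θ s a) :=
    fun s a => (hπ_smooth s a).differentiable one_ne_zero
  have hH_cd : ∀ s, ContDiff ℝ 1 (fun θ => H θ s) := by
    intro s
    have : (fun θ => H θ s) = fun θ => -∑ a, π θ s a * Real.log (π θ s a) :=
      funext fun θ => hH θ s
    rw [this]
    exact (ContDiff.sum fun a _ =>
      (hπ_smooth s a).mul ((hπ_smooth s a).log fun θ => (hπ_pos θ s a).ne')).neg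
  have hg_cd : ∀ s' : S, ContDiff ℝ 1 (fun θ => (∑ a', π θ s' a' * r s' a') + H θ s') :=
    fun s' => (ContDiff.sum fun a' _ => (hπ_smooth s' a').mul contDiff_const).add (hH_cd s')
  -- pk facts
  have hpk_nonneg : ∀ k θ s s', 0 ≤ pk θ k s s' := by
    intro k
    induction k with
    | zero => intro θ s s'; rw [hpk0]; split_ifs <;> norm_num
    | succ k ih =>
      intro θ s s'
      rw [hpkS]
      exact Finset.sum_nonneg fun a _ => mul_nonneg (hπ_pos θ s a).le
        (Finset.sum_nonneg fun s'' _ => mul_nonneg (hp_nonneg s a s'') (ih θ s'' s'))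
  have hpk_sum : ∀ k θ s, ∑ s', pk θ k s s' = 1 := by
    intro k
    induction k with
    | zero => intro θ s; simp [hpk0]
    | succ k ih =>
      intro θ s
      calc ∑ s', pk θ (k + 1) s s'
          = ∑ s', ∑ a, π θ s a * ∑ s'', p s a s'' * pk θ k s'' s' := by
            simp only [hpkS]
        _ = ∑ a, π θ s a * ∑ s'', p s a s'' * ∑ s', pk θ k s'' s' := by
            rw [Finset.sum_comm]
            refine Finset.sum_congr rfl fun a _ => ?_
            rw [← Finset.mul_sum]
            congr 1
            rw [Finset.sum_comm]
            exact Finset.sum_congr rfl fun s'' _ => (Finset.mul_sum _ _ _).symm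
        _ = 1 := by simp [ih, hp_sum, hπ_sum]
  have hpk_le_one : ∀ k θ s s', pk θ k s s' ≤ 1 := fun k θ s s' =>
    calc pk θ k s s' ≤ ∑ s'', pk θ k s s'' :=
          Finset.single_le_sum (fun i _ => hpk_nonneg k θ s i) (Finset.mem_univ s')
      _ = 1 := hpk_sum k θ s
  have hpk_cd : ∀ k (s s' : S), ContDiff ℝ 1 (fun θ => pk θ k s s') := by
    intro k
    induction k with
    | zero =>
      intro s s'
      have : (fun θ => pk θ 0 s s') = fun _ => (if s' = s then (1:ℝ) else 0) :=
        funext fun θ => hpk0 θ s s'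
      rw [this]; exact contDiff_const
    | succ k ih =>
      intro s s'
      have : (fun θ => pk θ (k+1) s s')
          = fun θ => ∑ a, π θ s a * ∑ s'', p s a s'' * pk θ k s'' s' :=
        funext fun θ => hpkS θ k s s'
      rw [this]
      exact ContDiff.sum fun a _ => (hπ_smooth s a).mul
        (ContDiff.sum fun s'' _ => contDiff_const.mul (ih s'' s'))
  have hpk_hd : ∀ k (s s' : S) (θ : ℝ),
      HasDerivAt (fun t => pk t k s s') (deriv (fun t => pk t k s s') θ) θ :=
    fun k s s' θ => ((hpk_cd k s s').differentiable one_ne_zero θ).hasDerivAt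
  -- bounds on a compact neighborhood of θ₀
  set K : Set ℝ := Set.Icc (θ₀ - 1) (θ₀ + 1) with hK
  set T : Set ℝ := Set.Ioo (θ₀ - 1) (θ₀ + 1) with hT
  have hθ₀T : θ₀ ∈ T := by constructor <;> simp [hT]
  have hTK : T ⊆ K := Set.Ioo_subset_Icc_self
  -- a single constant bounding everything needed on K
  have hΦcont : Continuous (fun θ =>
      (∑ s, ∑ a, |deriv (fun t => π t s a) θ|) +
      ((∑ s', |(∑ a', π θ s' a' * r s' a') + H θ s'|) +
       (∑ s', |deriv (fun t => (∑ a', π t s' a' * r s' a') + H t s') θ|))) := by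
    refine Continuous.add ?_ (Continuous.add ?_ ?_)
    · exact continuous_finset_sum _ fun s _ => continuous_finset_sum _ fun a _ =>
        ((hπ_smooth s a).continuous_deriv le_rfl).abs
    · exact continuous_finset_sum _ fun s' _ => ((hg_cd s').continuous).abs
    · exact continuous_finset_sum _ fun s' _ => ((hg_cd s').continuous_deriv le_rfl).abs
  obtain ⟨C0, hC0⟩ := isCompact_Icc.exists_bound_of_continuousOn hΦcont.continuousOn
  set C : ℝ := max C0 0 with hCdef
  have hC_nonneg : 0 ≤ C := le_max_right _ _
  have hΦnn : ∀ θ : ℝ,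
      (0:ℝ) ≤ (∑ s, ∑ a, |deriv (fun t => π t s a) θ|) ∧
      (0:ℝ) ≤ (∑ s', |(∑ a', π θ s' a' * r s' a') + H θ s'|) ∧
      (0:ℝ) ≤ (∑ s', |deriv (fun t => (∑ a', π t s' a' * r s' a') + H t s') θ|) := by
    intro θ
    refine ⟨Finset.sum_nonneg fun s _ => Finset.sum_nonneg fun a _ => abs_nonneg _,
      Finset.sum_nonneg fun s' _ => abs_nonneg _,
      Finset.sum_nonneg fun s' _ => abs_nonneg _⟩
  have hΦle : ∀ θ ∈ K,
      (∑ s, ∑ a, |deriv (fun t => π t s a) θ|) +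
      ((∑ s', |(∑ a', π θ s' a' * r s' a') + H θ s'|) +
       (∑ s', |deriv (fun t => (∑ a', π t s' a' * r s' a') + H t s') θ|)) ≤ C := by
    intro θ hθ
    have := hC0 θ hθ
    rw [Real.norm_eq_abs] at this
    exact le_trans (le_abs_self _) (le_trans this (le_max_left _ _))
  have hCπ : ∀ θ ∈ K, ∀ s, ∑ a, |deriv (fun t => π t s a) θ| ≤ C := by
    intro θ hθ s
    have h1 : ∑ a, |deriv (fun t => π t s a) θ| ≤ ∑ s, ∑ a, |deriv (fun t => π t s a) θ| :=
      Finset.single_le_sum (f := fun s => ∑ a, |deriv (fun t => π t s a) θ|)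
        (fun i _ => Finset.sum_nonneg fun a _ => abs_nonneg _) (Finset.mem_univ s)
    have h2 := hΦle θ hθ
    have h3 := (hΦnn θ).2.1
    have h4 := (hΦnn θ).2.2
    linarith
  have hCg : ∀ θ ∈ K, ∀ s', |(∑ a', π θ s' a' * r s' a') + H θ s'| ≤ C := by
    intro θ hθ s'
    have h1 : |(∑ a', π θ s' a' * r s' a') + H θ s'|
        ≤ ∑ s', |(∑ a', π θ s' a' * r s' a') + H θ s'| :=
      Finset.single_le_sum (f := fun s' => |(∑ a', π θ s' a' * r s' a') + H θ s'|)
        (fun i _ => abs_nonneg _) (Finset.mem_univ s')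
    have h2 := hΦle θ hθ
    have h3 := (hΦnn θ).1
    have h4 := (hΦnn θ).2.2
    linarith
  have hCg' : ∀ θ ∈ K, ∀ s',
      |deriv (fun t => (∑ a', π t s' a' * r s' a') + H t s') θ| ≤ C := by
    intro θ hθ s'
    have h1 : |deriv (fun t => (∑ a', π t s' a' * r s' a') + H t s') θ|
        ≤ ∑ s', |deriv (fun t => (∑ a', π t s' a' * r s' a') + H t s') θ| :=
      Finset.single_le_sum (f := fun s' => |deriv (fun t => (∑ a', π t s' a' * r s' a') + H t s') θ|)
        (fun i _ => abs_nonneg _) (Finset.mem_univ s')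
    have h2 := hΦle θ hθ
    have h3 := (hΦnn θ).1
    have h4 := (hΦnn θ).2.1
    linarith
  -- derivative bound for pk on K
  have hdpk : ∀ k, ∀ θ ∈ K, ∀ s s', |deriv (fun t => pk t k s s') θ| ≤ k * C := by
    intro k
    induction k with
    | zero =>
      intro θ hθ s s'
      have : (fun t => pk t 0 s s') = fun _ => (if s' = s then (1:ℝ) else 0) :=
        funext fun t => hpk0 t s s'
      rw [this, deriv_const]
      simp
    | succ k ih =>
      intro θ hθ s s'
      have hfe : (fun t => pk t (k+1) s s')
          = fun t => ∑ a, π t s a * ∑ s'', p s a s'' * pk t k s'' s' :=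
        funext fun t => hpkS t k s s'
      have hD : HasDerivAt (fun t => ∑ a, π t s a * ∑ s'', p s a s'' * pk t k s'' s')
          (∑ a, (deriv (fun t => π t s a) θ * (∑ s'', p s a s'' * pk θ k s'' s') +
            π θ s a * ∑ s'', p s a s'' * deriv (fun t => pk t k s'' s') θ)) θ :=
        HasDerivAt.fun_sum fun a _ => (hπ_diff s a θ).hasDerivAt.mul
          (HasDerivAt.fun_sum fun s'' _ => (hpk_hd k s'' s' θ).const_mul _)
      rw [hfe, hD.deriv]
      have hterm : ∀ a : A,
          |deriv (fun t => π t s a) θ * (∑ s'', p s a s'' * pk θ k s'' s') +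
            π θ s a * ∑ s'', p s a s'' * deriv (fun t => pk t k s'' s') θ|
          ≤ |deriv (fun t => π t s a) θ| + π θ s a * (k * C) := by
        intro a
        have hW2nn : 0 ≤ ∑ s'', p s a s'' * pk θ k s'' s' :=
          Finset.sum_nonneg fun s'' _ => mul_nonneg (hp_nonneg s a s'') (hpk_nonneg k θ s'' s')
        have hW2le : ∑ s'', p s a s'' * pk θ k s'' s' ≤ 1 := by
          calc ∑ s'', p s a s'' * pk θ k s'' s' ≤ ∑ s'', p s a s'' * 1 :=
                Finset.sum_le_sum fun s'' _ =>
                  mul_le_mul_of_nonneg_left (hpk_le_one k θ s'' s') (hp_nonneg s a s'')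
            _ = 1 := by simp [hp_sum]
        have hW1 : |∑ s'', p s a s'' * deriv (fun t => pk t k s'' s') θ| ≤ k * C := by
          calc |∑ s'', p s a s'' * deriv (fun t => pk t k s'' s') θ|
              ≤ ∑ s'', |p s a s'' * deriv (fun t => pk t k s'' s') θ| :=
                Finset.abs_sum_le_sum_abs _ _
            _ ≤ ∑ s'', p s a s'' * (k * C) := by
                refine Finset.sum_le_sum fun s'' _ => ?_
                rw [abs_mul, abs_of_nonneg (hp_nonneg s a s'')]
                exact mul_le_mul_of_nonneg_left (ih θ hθ s'' s') (hp_nonneg s a s'')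
            _ = k * C := by rw [← Finset.sum_mul, hp_sum, one_mul]
        calc |deriv (fun t => π t s a) θ * (∑ s'', p s a s'' * pk θ k s'' s') +
              π θ s a * ∑ s'', p s a s'' * deriv (fun t => pk t k s'' s') θ|
            ≤ |deriv (fun t => π t s a) θ * (∑ s'', p s a s'' * pk θ k s'' s')| +
              |π θ s a * ∑ s'', p s a s'' * deriv (fun t => pk t k s'' s') θ| := abs_add_le _ _
          _ ≤ |deriv (fun t => π t s a) θ| + π θ s a * (k * C) := by
              rw [abs_mul, abs_mul, abs_of_nonneg (hπ_pos θ s a).le,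
                abs_of_nonneg hW2nn]
              have h1 : |deriv (fun t => π t s a) θ| * (∑ s'', p s a s'' * pk θ k s'' s')
                  ≤ |deriv (fun t => π t s a) θ| * 1 :=
                mul_le_mul_of_nonneg_left hW2le (abs_nonneg _)
              have h2 : π θ s a * |∑ s'', p s a s'' * deriv (fun t => pk t k s'' s') θ|
                  ≤ π θ s a * (k * C) :=
                mul_le_mul_of_nonneg_left hW1 (hπ_pos θ s a).le
              linarith [h1, h2]
      calc |∑ a, (deriv (fun t => π t s a) θ * (∑ s'', p s a s'' * pk θ k s'' s') +
              π θ s a * ∑ s'', p s a s'' * deriv (fun t => pk t k s'' s') θ)|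
          ≤ ∑ a, |deriv (fun t => π t s a) θ * (∑ s'', p s a s'' * pk θ k s'' s') +
              π θ s a * ∑ s'', p s a s'' * deriv (fun t => pk t k s'' s') θ| :=
            Finset.abs_sum_le_sum_abs _ _
        _ ≤ ∑ a, (|deriv (fun t => π t s a) θ| + π θ s a * (k * C)) :=
            Finset.sum_le_sum fun a _ => hterm a
        _ = (∑ a, |deriv (fun t => π t s a) θ|) + (∑ a, π θ s a) * (k * C) := by
            rw [Finset.sum_add_distrib, Finset.sum_mul]
        _ ≤ C + 1 * (k * C) := by
            have := hCπ θ hθ s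
            rw [hπ_sum θ s]
            linarith
        _ = (↑(k + 1)) * C := by push_cast; ring
  -- differentiability of Q at θ₀
  have hQd : ∀ a, DifferentiableAt ℝ (fun θ => Q θ s₀ a) θ₀ := by
    intro a
    set N : ℝ := (Fintype.card S : ℝ) with hNdef
    have hN_nonneg : (0:ℝ) ≤ N := Nat.cast_nonneg _
    -- summable bound
    have hu : Summable (fun k : ℕ => (N * (C * C + C)) * (((k:ℝ) + 1) * γ ^ k)) := by
      apply Summable.mul_left
      have h1 : Summable (fun k : ℕ => (k:ℝ) * γ ^ k) := by
        simpa using summable_pow_mul_geometric_of_norm_lt_one 1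
          (by rwa [Real.norm_eq_abs, abs_of_nonneg hγ0])
      have h2 : Summable (fun k : ℕ => γ ^ k) := summable_geometric_of_lt_one hγ0 hγ1
      simpa [add_mul, one_mul] using h1.add h2
    -- derivative of each term
    have hF : ∀ (k : ℕ) (θ : ℝ), HasDerivAt
        (fun θ => γ ^ (k + 1) *
          ∑ s', (∑ s₁, p s₀ a s₁ * pk θ k s₁ s') * ((∑ a', π θ s' a' * r s' a') + H θ s'))
        (γ ^ (k + 1) *
          ∑ s', ((∑ s₁, p s₀ a s₁ * deriv (fun t => pk t k s₁ s') θ) *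
              ((∑ a', π θ s' a' * r s' a') + H θ s') +
            (∑ s₁, p s₀ a s₁ * pk θ k s₁ s') *
              deriv (fun t => (∑ a', π t s' a' * r s' a') + H t s') θ)) θ := by
      intro k θ
      refine HasDerivAt.const_mul _ (HasDerivAt.fun_sum fun s' _ => ?_)
      exact (HasDerivAt.fun_sum fun s₁ _ => (hpk_hd k s₁ s' θ).const_mul _).mul
        (((hg_cd s').differentiable one_ne_zero θ).hasDerivAt)
    -- bound on the derivatives over T
    have hF'le : ∀ (k : ℕ) (θ : ℝ), θ ∈ T →
        ‖γ ^ (k + 1) *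
          ∑ s', ((∑ s₁, p s₀ a s₁ * deriv (fun t => pk t k s₁ s') θ) *
              ((∑ a', π θ s' a' * r s' a') + H θ s') +
            (∑ s₁, p s₀ a s₁ * pk θ k s₁ s') *
              deriv (fun t => (∑ a', π t s' a' * r s' a') + H t s') θ)‖
        ≤ (N * (C * C + C)) * (((k:ℝ) + 1) * γ ^ k) := by
      intro k θ hθT
      have hθK : θ ∈ K := hTK hθT
      have hterm : ∀ s' : S,
          |(∑ s₁, p s₀ a s₁ * deriv (fun t => pk t k s₁ s') θ) *
              ((∑ a', π θ s' a' * r s' a') + H θ s') +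
            (∑ s₁, p s₀ a s₁ * pk θ k s₁ s') *
              deriv (fun t => (∑ a', π t s' a' * r s' a') + H t s') θ|
          ≤ (k:ℝ) * C * C + C := by
        intro s'
        have hW1 : |∑ s₁, p s₀ a s₁ * deriv (fun t => pk t k s₁ s') θ| ≤ (k:ℝ) * C := by
          calc |∑ s₁, p s₀ a s₁ * deriv (fun t => pk t k s₁ s') θ|
              ≤ ∑ s₁, |p s₀ a s₁ * deriv (fun t => pk t k s₁ s') θ| :=
                Finset.abs_sum_le_sum_abs _ _
            _ ≤ ∑ s₁, p s₀ a s₁ * ((k:ℝ) * C) := by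
                refine Finset.sum_le_sum fun s₁ _ => ?_
                rw [abs_mul, abs_of_nonneg (hp_nonneg s₀ a s₁)]
                exact mul_le_mul_of_nonneg_left (hdpk k θ hθK s₁ s') (hp_nonneg s₀ a s₁)
            _ = (k:ℝ) * C := by rw [← Finset.sum_mul, hp_sum, one_mul]
        have hW2nn : 0 ≤ ∑ s₁, p s₀ a s₁ * pk θ k s₁ s' :=
          Finset.sum_nonneg fun s₁ _ => mul_nonneg (hp_nonneg s₀ a s₁) (hpk_nonneg k θ s₁ s')
        have hW2le : ∑ s₁, p s₀ a s₁ * pk θ k s₁ s' ≤ 1 := by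
          calc ∑ s₁, p s₀ a s₁ * pk θ k s₁ s' ≤ ∑ s₁, p s₀ a s₁ * 1 :=
                Finset.sum_le_sum fun s₁ _ =>
                  mul_le_mul_of_nonneg_left (hpk_le_one k θ s₁ s') (hp_nonneg s₀ a s₁)
            _ = 1 := by simp [hp_sum]
        have hg1 := hCg θ hθK s'
        have hg2 := hCg' θ hθK s'
        calc |(∑ s₁, p s₀ a s₁ * deriv (fun t => pk t k s₁ s') θ) *
                ((∑ a', π θ s' a' * r s' a') + H θ s') +
              (∑ s₁, p s₀ a s₁ * pk θ k s₁ s') *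
                deriv (fun t => (∑ a', π t s' a' * r s' a') + H t s') θ|
            ≤ |∑ s₁, p s₀ a s₁ * deriv (fun t => pk t k s₁ s') θ| *
                |(∑ a', π θ s' a' * r s' a') + H θ s'| +
              |∑ s₁, p s₀ a s₁ * pk θ k s₁ s'| *
                |deriv (fun t => (∑ a', π t s' a' * r s' a') + H t s') θ| := by
              refine le_trans (abs_add_le _ _) ?_
              rw [abs_mul, abs_mul]
          _ ≤ ((k:ℝ) * C) * C + 1 * C := by
              have hc1 : |∑ s₁, p s₀ a s₁ * deriv (fun t => pk t k s₁ s') θ| *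
                  |(∑ a', π θ s' a' * r s' a') + H θ s'| ≤ ((k:ℝ) * C) * C :=
                mul_le_mul hW1 hg1 (abs_nonneg _)
                  (mul_nonneg (Nat.cast_nonneg _) hC_nonneg)
              have hc2 : |∑ s₁, p s₀ a s₁ * pk θ k s₁ s'| *
                  |deriv (fun t => (∑ a', π t s' a' * r s' a') + H t s') θ| ≤ 1 * C := by
                rw [abs_of_nonneg hW2nn]
                exact mul_le_mul hW2le hg2 (abs_nonneg _) zero_le_one
              linarith
          _ = (k:ℝ) * C * C + C := by ring
      rw [Real.norm_eq_abs, abs_mul, abs_of_nonneg (pow_nonneg hγ0 _)]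
      have hsum : |∑ s', ((∑ s₁, p s₀ a s₁ * deriv (fun t => pk t k s₁ s') θ) *
              ((∑ a', π θ s' a' * r s' a') + H θ s') +
            (∑ s₁, p s₀ a s₁ * pk θ k s₁ s') *
              deriv (fun t => (∑ a', π t s' a' * r s' a') + H t s') θ)|
          ≤ N * ((k:ℝ) * C * C + C) := by
        calc _ ≤ ∑ s' : S, |(∑ s₁, p s₀ a s₁ * deriv (fun t => pk t k s₁ s') θ) *
                ((∑ a', π θ s' a' * r s' a') + H θ s') +
              (∑ s₁, p s₀ a s₁ * pk θ k s₁ s') *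
                deriv (fun t => (∑ a', π t s' a' * r s' a') + H t s') θ| :=
              Finset.abs_sum_le_sum_abs _ _
          _ ≤ ∑ _s' : S, ((k:ℝ) * C * C + C) := Finset.sum_le_sum fun s' _ => hterm s'
          _ = N * ((k:ℝ) * C * C + C) := by
              rw [Finset.sum_const, Finset.card_univ, nsmul_eq_mul, hNdef]
      have hγk1 : γ ^ (k + 1) ≤ γ ^ k :=
        pow_le_pow_of_le_one hγ0 hγ1.le (Nat.le_succ k)
      have hstep : γ ^ (k + 1) * (N * ((k:ℝ) * C * C + C))
          ≤ (N * (C * C + C)) * (((k:ℝ) + 1) * γ ^ k) := by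
        have hkn : (0:ℝ) ≤ (k:ℝ) := Nat.cast_nonneg _
        have h1 : N * ((k:ℝ) * C * C + C) ≤ N * ((C * C + C) * ((k:ℝ) + 1)) := by
          apply mul_le_mul_of_nonneg_left _ hN_nonneg
          nlinarith [hC_nonneg, hkn]
        calc γ ^ (k + 1) * (N * ((k:ℝ) * C * C + C))
            ≤ γ ^ k * (N * ((C * C + C) * ((k:ℝ) + 1))) := by
              apply mul_le_mul hγk1 h1
                (mul_nonneg hN_nonneg (by nlinarith [hC_nonneg, hkn]))
                (pow_nonneg hγ0 _)
          _ = (N * (C * C + C)) * (((k:ℝ) + 1) * γ ^ k) := by ring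
      calc γ ^ (k + 1) * |∑ s', ((∑ s₁, p s₀ a s₁ * deriv (fun t => pk t k s₁ s') θ) *
              ((∑ a', π θ s' a' * r s' a') + H θ s') +
            (∑ s₁, p s₀ a s₁ * pk θ k s₁ s') *
              deriv (fun t => (∑ a', π t s' a' * r s' a') + H t s') θ)|
          ≤ γ ^ (k + 1) * (N * ((k:ℝ) * C * C + C)) :=
            mul_le_mul_of_nonneg_left hsum (pow_nonneg hγ0 _)
        _ ≤ (N * (C * C + C)) * (((k:ℝ) + 1) * γ ^ k) := hstep
    -- summability at θ₀
    have hF0 : Summable (fun k : ℕ => γ ^ (k + 1) *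
        ∑ s', (∑ s₁, p s₀ a s₁ * pk θ₀ k s₁ s') * ((∑ a', π θ₀ s' a' * r s' a') + H θ₀ s')) := by
      refine Summable.of_norm_bounded (g := fun k : ℕ => (N * C * γ) * γ ^ k) ?_ ?_
      · exact (summable_geometric_of_lt_one hγ0 hγ1).mul_left _
      · intro k
        rw [Real.norm_eq_abs, abs_mul, abs_of_nonneg (pow_nonneg hγ0 _)]
        have hθ₀K : θ₀ ∈ K := hTK hθ₀T
        have hsum : |∑ s', (∑ s₁, p s₀ a s₁ * pk θ₀ k s₁ s') *
            ((∑ a', π θ₀ s' a' * r s' a') + H θ₀ s')| ≤ N * C := by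
          calc _ ≤ ∑ s' : S, |(∑ s₁, p s₀ a s₁ * pk θ₀ k s₁ s') *
                ((∑ a', π θ₀ s' a' * r s' a') + H θ₀ s')| := Finset.abs_sum_le_sum_abs _ _
            _ ≤ ∑ _s' : S, C := by
                refine Finset.sum_le_sum fun s' _ => ?_
                rw [abs_mul]
                have hW2nn : 0 ≤ ∑ s₁, p s₀ a s₁ * pk θ₀ k s₁ s' :=
                  Finset.sum_nonneg fun s₁ _ =>
                    mul_nonneg (hp_nonneg s₀ a s₁) (hpk_nonneg k θ₀ s₁ s')
                have hW2le : ∑ s₁, p s₀ a s₁ * pk θ₀ k s₁ s' ≤ 1 := by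
                  calc ∑ s₁, p s₀ a s₁ * pk θ₀ k s₁ s' ≤ ∑ s₁, p s₀ a s₁ * 1 :=
                        Finset.sum_le_sum fun s₁ _ =>
                          mul_le_mul_of_nonneg_left (hpk_le_one k θ₀ s₁ s') (hp_nonneg s₀ a s₁)
                    _ = 1 := by simp [hp_sum]
                calc |∑ s₁, p s₀ a s₁ * pk θ₀ k s₁ s'| *
                      |(∑ a', π θ₀ s' a' * r s' a') + H θ₀ s'| ≤ 1 * C := by
                      rw [abs_of_nonneg hW2nn]
                      exact mul_le_mul hW2le (hCg θ₀ hθ₀K s') (abs_nonneg _) zero_le_one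
                  _ = C := one_mul C
            _ = N * C := by rw [Finset.sum_const, Finset.card_univ, nsmul_eq_mul, hNdef]
        calc γ ^ (k + 1) * |∑ s', (∑ s₁, p s₀ a s₁ * pk θ₀ k s₁ s') *
              ((∑ a', π θ₀ s' a' * r s' a') + H θ₀ s')|
            ≤ γ ^ (k + 1) * (N * C) :=
              mul_le_mul_of_nonneg_left hsum (pow_nonneg hγ0 _)
          _ = (N * C * γ) * γ ^ k := by ring
    have key := hasDerivAt_tsum_of_isPreconnected hu isOpen_Ioo isPreconnected_Ioo
      (fun k θ _ => hF k θ) hF'le hθ₀T hF0 hθ₀T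
    have hrw : (fun θ => Q θ s₀ a) = fun θ => r s₀ a + ∑' k : ℕ, γ ^ (k + 1) *
        ∑ s', (∑ s₁, p s₀ a s₁ * pk θ k s₁ s') * ((∑ a', π θ s' a' * r s' a') + H θ s') :=
      funext fun θ => hQ θ s₀ a
    rw [hrw]
    exact (differentiableAt_const _).add key.differentiableAt
  -- final assembly
  have hfinal : HasDerivAt (fun θ => (∑ a, π θ s₀ a * Q θ s₀ a) + H θ s₀)
      ((∑ a, (deriv (fun θ => π θ s₀ a) θ₀ * Q θ₀ s₀ a +
        π θ₀ s₀ a * deriv (fun θ => Q θ s₀ a) θ₀)) + deriv (fun θ => H θ s₀) θ₀) θ₀ :=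
    (HasDerivAt.fun_sum fun a _ =>
      (hπ_diff s₀ a θ₀).hasDerivAt.mul (hQd a).hasDerivAt).add
      (((hH_cd s₀).differentiable one_ne_zero θ₀).hasDerivAt)
  convert hfinal using 1
  rw [Finset.sum_add_distrib]
  ring
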